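/- For any real numbers J₁, J₂ and any σ₁, σ₂ ∈ {+1, -1}, tanh(J₁σ₁ + J₂σ₂) = aσ₁ + bσ₂, where a = sinh(2J₁)/(cosh(2J₁)+cosh(2J₂)) and b = sinh(2J₂)/(cosh(2J₁)+cosh(2J₂)). -/
import Mathlib

lemma key (x y : ℝ) : Real.tanh (x+y) =
    (Real.sinh (2*x)+Real.sinh (2*y))/(Real.cosh (2*x)+Real.cosh (2*y)) := by
  have hd : (0:ℝ) < Real.cosh (2*x)+Real.cosh (2*y) := by positivity
  rw [Real.tanh_eq_sinh_div_cosh, div_eq_div_iff (Real.cosh_pos _).ne' hd.ne',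
    Real.sinh_add, Real.cosh_add, Real.sinh_two_mul, Real.sinh_two_mul,
    Real.cosh_two_mul, Real.cosh_two_mul]
  linear_combination (Real.sinh x * Real.cosh y - Real.cosh x * Real.sinh y) *
    (Real.cosh_sq_sub_sinh_sq y - Real.cosh_sq_sub_sinh_sq x)

theorem stmt_1 (J₁ J₂ σ₁ σ₂ : ℝ)
    (hσ₁ : σ₁ = 1 ∨ σ₁ = -1) (hσ₂ : σ₂ = 1 ∨ σ₂ = -1) :
    Real.tanh (J₁ * σ₁ + J₂ * σ₂) =
      (Real.sinh (2 * J₁) / (Real.cosh (2 * J₁) + Real.cosh (2 * J₂))) * σ₁ +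
      (Real.sinh (2 * J₂) / (Real.cosh (2 * J₁) + Real.cosh (2 * J₂))) * σ₂ := by
  rcases hσ₁ with h1 | h1 <;> rcases hσ₂ with h2 | h2 <;> subst h1 h2 <;>
    [ (have := key J₁ J₂);
      (have := key J₁ (-J₂));
      (have := key (-J₁) J₂);
      (have := key (-J₁) (-J₂)) ] <;>
    simp only [mul_one, mul_neg, mul_neg_one, Real.sinh_neg, Real.cosh_neg,
      neg_neg, ← sub_eq_add_neg] at this ⊢ <;>
    rw [this] <;> ring
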